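/- In an inductive class (a class of L-structures closed under colimits of directed systems of homomorphisms) that is nonempty, every structure in the class admits a homomorphism into a positively existentially closed structure of the class, where A is positively existentially closed if every homomorphism from A into a member of the class reflects positive existential formulas (is an immersion). -/

import Mathlib

universe u v w

open FirstOrder FirstOrder.Language

/-- Positive existential formulas: built from atomic formulas by finite conjunctions, finite
disjunctions and existential quantifications. -/
inductive IsPE {L : FirstOrder.Language.{u, v}} {α : Type*} :
    {n : ℕ} → L.BoundedFormula α n → Prop
  | atomic {n : ℕ} {φ : L.BoundedFormula α n} (h : φ.IsAtomic) : IsPE φ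
  | inf {n : ℕ} {φ ψ : L.BoundedFormula α n} : IsPE φ → IsPE ψ → IsPE (φ ⊓ ψ)
  | sup {n : ℕ} {φ ψ : L.BoundedFormula α n} : IsPE φ → IsPE ψ → IsPE (φ ⊔ ψ)
  | ex {n : ℕ} {φ : L.BoundedFormula α (n + 1)} : IsPE φ → IsPE φ.ex

namespace PEC

variable {L : FirstOrder.Language.{u, v}}

theorem isPE_realize_hom {M : Type*} {N : Type*} [L.Structure M] [L.Structure N]
    (g : M →[L] N) {α : Type*} : ∀ {n : ℕ} {φ : L.BoundedFormula α n}, IsPE φ →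
    ∀ (v : α → M) (xs : Fin n → M), φ.Realize v xs → φ.Realize (g ∘ v) (g ∘ xs) := by
  intro n φ hφ
  induction hφ with
  | atomic h =>
    intro v xs hr
    cases h with
    | equal t₁ t₂ =>
      rw [BoundedFormula.realize_bdEqual] at hr ⊢
      rw [show (Sum.elim (g ∘ v) (g ∘ xs)) = g ∘ (Sum.elim v xs) by funext x; cases x <;> rfl]
      rw [HomClass.realize_term, HomClass.realize_term, hr]
    | rel R ts =>
      rw [BoundedFormula.realize_rel] at hr ⊢
      rw [show (Sum.elim (g ∘ v) (g ∘ xs)) = g ∘ (Sum.elim v xs) by funext x; cases x <;> rfl]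
      simp only [HomClass.realize_term]
      exact g.map_rel' R _ hr
  | inf _ _ ih₁ ih₂ =>
    intro v xs hr
    rw [BoundedFormula.realize_inf] at hr ⊢
    exact ⟨ih₁ v xs hr.1, ih₂ v xs hr.2⟩
  | sup _ _ ih₁ ih₂ =>
    intro v xs hr
    rw [BoundedFormula.realize_sup] at hr ⊢
    exact hr.elim (fun h => Or.inl (ih₁ v xs h)) (fun h => Or.inr (ih₂ v xs h))
  | ex _ ih =>
    intro v xs hr
    rw [BoundedFormula.realize_ex] at hr ⊢
    obtain ⟨x, hx⟩ := hr
    refine ⟨g x, ?_⟩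
    have := ih v (Fin.snoc xs x) hx
    rwa [Fin.comp_snoc] at this

theorem isPE_realize_hom_formula {M : Type*} {N : Type*} [L.Structure M] [L.Structure N]
    (g : M →[L] N) {n : ℕ} {φ : L.Formula (Fin n)} (hφ : IsPE φ) (v : Fin n → M)
    (h : φ.Realize v) : φ.Realize (fun k => g (v k)) := by
  have := isPE_realize_hom g hφ v default h
  rwa [show g ∘ (default : Fin 0 → M) = (default : Fin 0 → N) from funext fun x => x.elim0]
    at this

variable (L)
variable (C : (M : Type w) → L.Structure M → Prop)

/-- A directed system of structures in `C`, together with a cone from a base structure `A`. -/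
structure PSys (A : Type w) (iA : L.Structure A) (τ : Type w) [Preorder τ] where
  carr : τ → Type w
  str : ∀ j, L.Structure (carr j)
  inC : ∀ j, C (carr j) (str j)
  mp : ∀ j k, j ≤ k → @Hom L (carr j) (carr k) (str j) (str k)
  mp_self : ∀ j x, mp j j le_rfl x = x
  mp_comp : ∀ j k l (h1 : j ≤ k) (h2 : k ≤ l) (x : carr j),
    mp k l h2 (mp j k h1 x) = mp j l (h1.trans h2) x
  fromA : ∀ j, @Hom L A (carr j) iA (str j)
  fromA_comp : ∀ j k (h : j ≤ k) (x : A), mp j k h (fromA j x) = fromA k x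

namespace PSys

variable {L C}
variable {A : Type w} {iA : L.Structure A} {τ : Type w} [Preorder τ]

/-- mp is the identity on equal indices (any proof). -/
theorem mp_self' (T : PSys L C A iA τ) {j k : τ} (e : j = k) (h : j ≤ k) (x : T.carr j) :
    HEq (T.mp j k h x) x := by subst e; rw [T.mp_self]

/-- Reindexing a directed system along a monotone map. -/
def reindex {τ' : Type w} [Preorder τ'] (e : τ' → τ) (he : Monotone e) (T : PSys L C A iA τ) :
    PSys L C A iA τ' where
  carr j := T.carr (e j)
  str j := T.str (e j)
  inC j := T.inC (e j)
  mp j k h := T.mp (e j) (e k) (he h)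
  mp_self j x := T.mp_self (e j) x
  mp_comp j k l h1 h2 x := T.mp_comp (e j) (e k) (e l) (he h1) (he h2) x
  fromA j := T.fromA (e j)
  fromA_comp j k h x := T.fromA_comp (e j) (e k) (he h) x

section Lim

variable [IsDirected τ (· ≤ ·)] [Nonempty τ] (T : PSys L C A iA τ)

/-- The direct-limit equivalence relation. -/
def lrel (x y : Σ j, T.carr j) : Prop :=
  ∃ (k : τ) (h1 : x.1 ≤ k) (h2 : y.1 ≤ k), T.mp x.1 k h1 x.2 = T.mp y.1 k h2 y.2

theorem lrel_equiv : Equivalence (lrel T) := by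
  constructor
  · intro x; exact ⟨x.1, le_rfl, le_rfl, rfl⟩
  · rintro x y ⟨k, h1, h2, e⟩; exact ⟨k, h2, h1, e.symm⟩
  · rintro x y z ⟨k, h1, h2, e⟩ ⟨k', h1', h2', e'⟩
    obtain ⟨m, hm1, hm2⟩ := directed_of (· ≤ ·) k k'
    refine ⟨m, h1.trans hm1, h2'.trans hm2, ?_⟩
    calc T.mp x.1 m _ x.2 = T.mp k m hm1 (T.mp x.1 k h1 x.2) := (T.mp_comp _ _ _ _ _ _).symm
      _ = T.mp k m hm1 (T.mp y.1 k h2 y.2) := by rw [e]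
      _ = T.mp y.1 m (h2.trans hm1) y.2 := T.mp_comp _ _ _ _ _ _
      _ = T.mp k' m hm2 (T.mp y.1 k' h1' y.2) := (T.mp_comp _ _ _ _ _ _).symm
      _ = T.mp k' m hm2 (T.mp z.1 k' h2' z.2) := by rw [e']
      _ = T.mp z.1 m _ z.2 := T.mp_comp _ _ _ _ _ _

/-- The setoid for the direct limit. -/
def lsetoid : Setoid (Σ j, T.carr j) := ⟨lrel T, lrel_equiv T⟩

/-- The direct limit of a directed system of homomorphisms. -/
def Lim : Type w := Quotient (lsetoid T)

/-- Canonical map into the direct limit. -/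
def lmk (j : τ) (x : T.carr j) : Lim T := Quotient.mk (lsetoid T) ⟨j, x⟩

theorem lmk_eq_lmk {j k m : τ} (hj : j ≤ m) (hk : k ≤ m) {x : T.carr j} {y : T.carr k}
    (e : T.mp j m hj x = T.mp k m hk y) : lmk T j x = lmk T k y :=
  Quotient.sound ⟨m, hj, hk, e⟩

theorem lmk_mp {j k : τ} (h : j ≤ k) (x : T.carr j) : lmk T k (T.mp j k h x) = lmk T j x := by
  exact lmk_eq_lmk T le_rfl h (T.mp_self _ _)

theorem exact {j k : τ} {x : T.carr j} {y : T.carr k} (e : lmk T j x = lmk T k y) :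
    ∃ (m : τ) (h1 : j ≤ m) (h2 : k ≤ m), T.mp j m h1 x = T.mp k m h2 y :=
  Quotient.exact e

/-- Unify finitely many elements of the limit at a single stage. -/
noncomputable def unify {n : ℕ} (v : Fin n → Lim T) : Σ (k : τ), Fin n → T.carr k :=
  let q : Fin n → Σ j, T.carr j := fun i => (v i).out
  let H := Finite.exists_le (fun i => (q i).1)
  ⟨H.choose, fun i => T.mp (q i).1 H.choose (H.choose_spec i) (q i).2⟩

theorem unify_spec {n : ℕ} (v : Fin n → Lim T) (i : Fin n) :
    lmk T (unify T v).1 ((unify T v).2 i) = v i := by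
  show lmk T _ (T.mp _ _ _ _) = v i
  refine (lmk_mp T _ _).trans ?_
  show Quotient.mk _ (Quotient.out (v i)) = v i
  exact Quotient.out_eq _

/-- The structure on the direct limit. -/
noncomputable def limStr : L.Structure (Lim T) where
  funMap {n} F v := lmk T (unify T v).1 (@Structure.funMap L _ (T.str (unify T v).1) n F ((unify T v).2))
  RelMap {n} R v := ∃ (k : τ) (w : Fin n → T.carr k),
    (∀ i, lmk T k (w i) = v i) ∧ @Structure.RelMap L _ (T.str k) n R w

theorem funMap_lmk {n : ℕ} (F : L.Functions n) (k : τ) (w : Fin n → T.carr k) :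
    @Structure.funMap L (Lim T) (limStr T) n F (fun i => lmk T k (w i)) =
      lmk T k (@Structure.funMap L _ (T.str k) n F w) := by
  letI := fun j => T.str j
  show lmk T (unify T _).1 _ = lmk T k _
  set u := unify T (fun i => lmk T k (w i)) with hu
  have hspec : ∀ i, lmk T u.1 (u.2 i) = lmk T k (w i) := fun i => unify_spec T _ i
  -- for each i, obtain a stage where the unified element agrees with (w i)
  have hex : ∀ i, ∃ (m : τ) (h1 : u.1 ≤ m) (h2 : k ≤ m),
      T.mp u.1 m h1 (u.2 i) = T.mp k m h2 (w i) := fun i => exact T (hspec i)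
  obtain ⟨m₀, hm₀1, hm₀2⟩ := directed_of (· ≤ ·) u.1 k
  obtain ⟨m, hm⟩ := Finite.exists_le
    (fun o : Option (Fin n) => o.elim m₀ (fun i => (hex i).choose))
  have hum : u.1 ≤ m := hm₀1.trans (hm none)
  have hkm : k ≤ m := hm₀2.trans (hm none)
  refine lmk_eq_lmk T hum hkm ?_
  rw [Hom.map_fun, Hom.map_fun]
  congr 1
  funext i
  obtain ⟨h1, h2, e⟩ := (hex i).choose_spec
  show T.mp u.1 m hum (u.2 i) = T.mp k m hkm (w i)
  have hi : (hex i).choose ≤ m := hm (some i)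
  calc T.mp u.1 m hum (u.2 i) = T.mp _ m hi (T.mp u.1 _ h1 (u.2 i)) := (T.mp_comp _ _ _ _ _ _).symm
    _ = T.mp _ m hi (T.mp k _ h2 (w i)) := by rw [e]
    _ = T.mp k m hkm (w i) := T.mp_comp _ _ _ _ _ _

theorem relMap_lmk {n : ℕ} (R : L.Relations n) (k : τ) (w : Fin n → T.carr k)
    (h : @Structure.RelMap L _ (T.str k) n R w) :
    @Structure.RelMap L (Lim T) (limStr T) n R (fun i => lmk T k (w i)) :=
  ⟨k, w, fun _ => rfl, h⟩

theorem relMap_reflect {n : ℕ} (R : L.Relations n) (k : τ) (a : Fin n → T.carr k)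
    (h : @Structure.RelMap L (Lim T) (limStr T) n R (fun i => lmk T k (a i))) :
    ∃ (m : τ) (hm : k ≤ m), @Structure.RelMap L _ (T.str m) n R (fun i => T.mp k m hm (a i)) := by
  letI := fun j => T.str j
  obtain ⟨k', w, hw, hR⟩ := h
  have hex : ∀ i, ∃ (m : τ) (h1 : k' ≤ m) (h2 : k ≤ m),
      T.mp k' m h1 (w i) = T.mp k m h2 (a i) := fun i => exact T (hw i)
  obtain ⟨m₀, hm₀1, hm₀2⟩ := directed_of (· ≤ ·) k' k
  obtain ⟨m, hm⟩ := Finite.exists_le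
    (fun o : Option (Fin n) => o.elim m₀ (fun i => (hex i).choose))
  have hk'm : k' ≤ m := hm₀1.trans (hm none)
  have hkm : k ≤ m := hm₀2.trans (hm none)
  refine ⟨m, hkm, ?_⟩
  have : (fun i => T.mp k m hkm (a i)) = (fun i => T.mp k' m hk'm (w i)) := by
    funext i
    obtain ⟨h1, h2, e⟩ := (hex i).choose_spec
    have hi : (hex i).choose ≤ m := hm (some i)
    calc T.mp k m hkm (a i) = T.mp _ m hi (T.mp k _ h2 (a i)) := (T.mp_comp _ _ _ _ _ _).symm
      _ = T.mp _ m hi (T.mp k' _ h1 (w i)) := by rw [e]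
      _ = T.mp k' m hk'm (w i) := T.mp_comp _ _ _ _ _ _
  rw [this]
  exact (T.mp k' m hk'm).map_rel' R w hR

/-- The canonical homomorphism into the direct limit. -/
noncomputable def of (k : τ) : @Hom L (T.carr k) (Lim T) (T.str k) (limStr T) :=
  letI := fun j => T.str j
  letI := limStr T
  { toFun := lmk T k
    map_fun' := fun F x => (funMap_lmk T F k x).symm
    map_rel' := fun R x h => relMap_lmk T R k x h }


theorem lmk_fromA (k k' : τ) (z : A) : lmk T k (T.fromA k z) = lmk T k' (T.fromA k' z) := by
  obtain ⟨m, h1, h2⟩ := directed_of (· ≤ ·) k k'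
  refine lmk_eq_lmk T h1 h2 ?_
  rw [T.fromA_comp, T.fromA_comp]

theorem exists_of (x : Lim T) : ∃ (k : τ) (a : T.carr k), lmk T k a = x := by
  obtain ⟨⟨k, a⟩, rfl⟩ := Quotient.exists_rep x
  exact ⟨k, a, rfl⟩

end Lim

end PSys

/-- The closure hypothesis, verbatim from the theorem statement. -/
def Hclosed (L : FirstOrder.Language.{u, v}) (C : (M : Type w) → L.Structure M → Prop) : Prop :=
    ∀ (ι : Type w) (_ : Preorder ι), IsDirected ι (· ≤ ·) → Nonempty ι →
      ∀ (G : ι → Type w) (instG : ∀ i, L.Structure (G i))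
        (f : ∀ i j, i ≤ j → (@Hom L (G i) (G j) (instG i) (instG j))),
        (∀ i (a : G i), (f i i le_rfl).toFun a = a) →
        (∀ i j k (hij : i ≤ j) (hjk : j ≤ k) (a : G i),
          (f j k hjk).toFun ((f i j hij).toFun a) = (f i k (le_trans hij hjk)).toFun a) →
        (∀ i, C (G i) (instG i)) →
        ∀ (N : Type w) (instN : L.Structure N) (g : ∀ i, @Hom L (G i) N (instG i) instN),
          (∀ i j (h : i ≤ j) (a : G i), (g j).toFun ((f i j h).toFun a) = (g i).toFun a) →
          (∀ x : N, ∃ i, ∃ a : G i, (g i).toFun a = x) →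
          (∀ i (l : ℕ) (R : L.Relations l) (a : Fin l → G i),
            @Structure.RelMap L N instN l R (fun k => (g i).toFun (a k)) →
            ∃ j, ∃ h : i ≤ j,
              @Structure.RelMap L (G j) (instG j) l R fun k => (f i j h).toFun (a k)) →
          (∀ i (a b : G i), (g i).toFun a = (g i).toFun b →
            ∃ j, ∃ h : i ≤ j, (f i j h).toFun a = (f i j h).toFun b) →
          C N instN

namespace PSys

variable {L : FirstOrder.Language.{u, v}} {C : (M : Type w) → L.Structure M → Prop}
variable {A : Type w} {iA : L.Structure A} {τ : Type w} [Preorder τ]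

theorem lim_inC (hC : Hclosed L C) [IsDirected τ (· ≤ ·)] [Nonempty τ] (T : PSys L C A iA τ) :
    C (Lim T) (limStr T) := by
  refine hC τ inferInstance inferInstance inferInstance T.carr T.str (fun i j h => T.mp i j h)
    T.mp_self (fun i j k hij hjk a => T.mp_comp i j k hij hjk a) T.inC (Lim T) (limStr T)
    (fun i => of T i) (fun i j h a => lmk_mp T h a) (exists_of T) ?_ ?_
  · exact fun i l R a h => relMap_reflect T R i a h
  · intro i a b e
    obtain ⟨m, h1, h2, ee⟩ := exact T e
    exact ⟨m, h1, ee.trans (by congr)⟩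

/-- Pointwise extensionality (with `HEq` for the dependent fields) for `PSys`. -/
theorem ext' {S S' : PSys L C A iA τ}
    (hc : ∀ j, S.carr j = S'.carr j)
    (hs : ∀ j, HEq (S.str j) (S'.str j))
    (hm : ∀ j k (h : j ≤ k), HEq (S.mp j k h) (S'.mp j k h))
    (ha : ∀ j, HEq (S.fromA j) (S'.fromA j)) : S = S' := by
  obtain ⟨c, s, i, m, ms, mc, f, fc⟩ := S
  obtain ⟨c', s', i', m', ms', mc', f', fc'⟩ := S'
  simp only at hc hs hm ha
  have : c = c' := funext hc
  subst this
  have : s = s' := funext fun j => eq_of_heq (hs j)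
  subst this
  have : m = m' := by
    funext j k h
    exact eq_of_heq (hm j k h)
  subst this
  have : f = f' := funext fun j => eq_of_heq (ha j)
  subst this
  rfl

theorem congr_carr {S S' : PSys L C A iA τ} (h : S = S') (j : τ) : S.carr j = S'.carr j := by
  subst h; rfl

theorem congr_str {S S' : PSys L C A iA τ} (h : S = S') (j : τ) : HEq (S.str j) (S'.str j) := by
  subst h; rfl

theorem congr_mp {S S' : PSys L C A iA τ} (h : S = S') (j k : τ) (hk : j ≤ k) :
    HEq (S.mp j k hk) (S'.mp j k hk) := by subst h; rfl

theorem congr_fromA {S S' : PSys L C A iA τ} (h : S = S') (j : τ) :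
    HEq (S.fromA j) (S'.fromA j) := by subst h; rfl

end PSys

section HomHEq

variable {L : FirstOrder.Language.{u, v}}

theorem hom_heq_ext {X X' Y Y' : Type w} {iX : L.Structure X} {iX' : L.Structure X'}
    {iY : L.Structure Y} {iY' : L.Structure Y'}
    (hX : X = X') (hiX : HEq iX iX') (hY : Y = Y') (hiY : HEq iY iY')
    {f : @Hom L X Y iX iY} {f' : @Hom L X' Y' iX' iY'}
    (h : ∀ (x : X) (x' : X'), HEq x x' → HEq (f.toFun x) (f'.toFun x')) : HEq f f' := by
  subst hX; subst hY
  have e1 := eq_of_heq hiX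
  subst e1
  have e2 := eq_of_heq hiY
  subst e2
  have : f = f' := by
    apply Hom.ext
    intro x
    exact eq_of_heq (h x x HEq.rfl)
  rw [this]

theorem hom_apply_heq {X X' Y Y' : Type w} {iX : L.Structure X} {iX' : L.Structure X'}
    {iY : L.Structure Y} {iY' : L.Structure Y'}
    (hX : X = X') (hiX : HEq iX iX') (hY : Y = Y') (hiY : HEq iY iY')
    {f : @Hom L X Y iX iY} {f' : @Hom L X' Y' iX' iY'}
    (hf : HEq f f') {x : X} {x' : X'} (hx : HEq x x') : HEq (f.toFun x) (f'.toFun x') := by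
  subst hX; subst hY
  have e1 := eq_of_heq hiX
  subst e1
  have e2 := eq_of_heq hiY
  subst e2
  have e3 := eq_of_heq hx
  subst e3
  have e4 := eq_of_heq hf
  subst e4
  rfl

/-- Composition of homomorphisms with explicit instances. -/
def homComp {X Y Z : Type w} {iX : L.Structure X} {iY : L.Structure Y} {iZ : L.Structure Z}
    (g : @Hom L Y Z iY iZ) (f : @Hom L X Y iX iY) : @Hom L X Z iX iZ :=
  letI := iX; letI := iY; letI := iZ
  g.comp f

theorem homComp_apply {X Y Z : Type w} {iX : L.Structure X} {iY : L.Structure Y}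
    {iZ : L.Structure Z} (g : @Hom L Y Z iY iZ) (f : @Hom L X Y iX iY) (x : X) :
    (homComp g f) x = g (f x) := rfl

end HomHEq
section TopDataSec

variable {L : FirstOrder.Language.{u, v}} {C : (M : Type w) → L.Structure M → Prop}
variable {A : Type w} {iA : L.Structure A}

/-- The data of a new top stage over a directed system: a structure in `C` receiving
homomorphisms from every stage, compatibly with the system and the cone from `A`. -/
structure TopData {τ : Type w} [Preorder τ] (T : PSys L C A iA τ) where
  B : Type w
  iB : L.Structure B
  hB : C B iB
  toTop : ∀ k, @Hom L (T.carr k) B (T.str k) iB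
  fromA' : @Hom L A B iA iB
  compat : ∀ k l (h : k ≤ l) (y : T.carr k), (toTop l) ((T.mp k l h) y) = (toTop k) y
  compatA : ∀ k (z : A), (toTop k) ((T.fromA k) z) = fromA' z

namespace TopData

variable {τ : Type w} [Preorder τ]

theorem heq_of {T T' : PSys L C A iA τ} (hT : T = T') {d : TopData T} {d' : TopData T'}
    (hB : d.B = d'.B) (hi : HEq d.iB d'.iB) (ht : ∀ k, HEq (d.toTop k) (d'.toTop k))
    (hf : HEq d.fromA' d'.fromA') : HEq d d' := by
  subst hT
  obtain ⟨B, iB, hB', tt, fa, c1, c2⟩ := d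
  obtain ⟨B', iB', hB'', tt', fa', c1', c2'⟩ := d'
  simp only at hB hi ht hf
  subst hB
  have e1 := eq_of_heq hi
  subst e1
  have e2 : tt = tt' := funext fun k => eq_of_heq (ht k)
  subst e2
  have e3 := eq_of_heq hf
  subst e3
  rfl

theorem congr_B {T T' : PSys L C A iA τ} (hT : T = T') {d : TopData T} {d' : TopData T'}
    (hd : HEq d d') : d.B = d'.B := by
  subst hT
  have := eq_of_heq hd
  subst this
  rfl

theorem congr_iB {T T' : PSys L C A iA τ} (hT : T = T') {d : TopData T} {d' : TopData T'}
    (hd : HEq d d') : HEq d.iB d'.iB := by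
  subst hT
  have := eq_of_heq hd
  subst this
  rfl

theorem congr_toTop {T T' : PSys L C A iA τ} (hT : T = T') {d : TopData T} {d' : TopData T'}
    (hd : HEq d d') (k : τ) : HEq (d.toTop k) (d'.toTop k) := by
  subst hT
  have := eq_of_heq hd
  subst this
  rfl

theorem congr_fromA' {T T' : PSys L C A iA τ} (hT : T = T') {d : TopData T} {d' : TopData T'}
    (hd : HEq d d') : HEq d.fromA' d'.fromA' := by
  subst hT
  have := eq_of_heq hd
  subst this
  rfl

end TopData

/-- Appending a top stage to a directed system. -/
def snocCarr {τ : Type w} [Preorder τ] (T : PSys L C A iA τ) (d : TopData T) :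
    WithTop τ → Type w := fun x =>
  match x with
  | ⊤ => d.B
  | (j : τ) => T.carr j

def snocStr {τ : Type w} [Preorder τ] (T : PSys L C A iA τ) (d : TopData T) :
    ∀ x, L.Structure (snocCarr T d x) := fun x =>
  match x with
  | ⊤ => d.iB
  | (j : τ) => T.str j

theorem snoc_inC {τ : Type w} [Preorder τ] (T : PSys L C A iA τ) (d : TopData T) :
    ∀ x, C (snocCarr T d x) (snocStr T d x) := fun x =>
  match x with
  | ⊤ => d.hB
  | (j : τ) => T.inC j

def snocMp {τ : Type w} [Preorder τ] (T : PSys L C A iA τ) (d : TopData T) :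
    ∀ (x y : WithTop τ), x ≤ y →
      @Hom L (snocCarr T d x) (snocCarr T d y) (snocStr T d x) (snocStr T d y) := fun x y h =>
  match x, y, h with
  | ⊤, ⊤, _ => @Hom.id L _ d.iB
  | (j : τ), ⊤, _ => d.toTop j
  | (j : τ), (l : τ), h => T.mp j l (WithTop.coe_le_coe.mp h)
  | ⊤, (l : τ), h => absurd (WithTop.top_le_iff.mp h) WithTop.coe_ne_top

def snocFromA {τ : Type w} [Preorder τ] (T : PSys L C A iA τ) (d : TopData T) :
    ∀ x, @Hom L A (snocCarr T d x) iA (snocStr T d x) := fun x =>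
  match x with
  | ⊤ => d.fromA'
  | (j : τ) => T.fromA j

/-- The extended system. -/
def snocTop {τ : Type w} [Preorder τ] (T : PSys L C A iA τ) (d : TopData T) :
    PSys L C A iA (WithTop τ) where
  carr := snocCarr T d
  str := snocStr T d
  inC := snoc_inC T d
  mp := snocMp T d
  mp_self := fun x z => by
    match x with
    | ⊤ => rfl
    | (j : τ) => exact T.mp_self j z
  mp_comp := fun x y z h1 h2 w => by
    match x, y, z, h1, h2 with
    | ⊤, ⊤, ⊤, _, _ => rfl
    | (j : τ), ⊤, ⊤, _, _ => rfl
    | (j : τ), (l : τ), ⊤, h1, _ => exact d.compat j l (WithTop.coe_le_coe.mp h1) w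
    | (j : τ), (l : τ), (m : τ), h1, h2 => exact T.mp_comp _ _ _ _ _ w
    | ⊤, (l : τ), _, h1, _ => exact absurd (WithTop.top_le_iff.mp h1) WithTop.coe_ne_top
    | (j : τ), ⊤, (m : τ), _, h2 => exact absurd (WithTop.top_le_iff.mp h2) WithTop.coe_ne_top
    | ⊤, ⊤, (m : τ), _, h2 => exact absurd (WithTop.top_le_iff.mp h2) WithTop.coe_ne_top
  fromA := snocFromA T d
  fromA_comp := fun x y h z => by
    match x, y, h with
    | ⊤, ⊤, _ => rfl
    | (j : τ), ⊤, _ => exact d.compatA j z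
    | (j : τ), (l : τ), h => exact T.fromA_comp j l (WithTop.coe_le_coe.mp h) z
    | ⊤, (l : τ), h => exact absurd (WithTop.top_le_iff.mp h) WithTop.coe_ne_top

end TopDataSec

section SatSec

variable {L : FirstOrder.Language.{u, v}} {C : (M : Type w) → L.Structure M → Prop}
variable {A : Type w} {iA : L.Structure A}
variable {ρ : Type w} (rq : ρ → Σ n : ℕ, L.Formula (Fin n) × (Fin n → A))

/-- The requirement attached to a stage: at stage `r : ρ` we must try to realize the `r`-th
positive existential formula; the top stage carries no requirement. -/
def SatO (x : WithTop ρ) (X : Type w) (iX : L.Structure X) (u : A → X) : Prop :=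
  match x with
  | ⊤ => True
  | (r : ρ) => @Formula.Realize L X iX _ (rq r).2.1 (fun k => u ((rq r).2.2 k))

/-- The result of one witness-choosing step. -/
structure StepOut (x : WithTop ρ) (X : Type w) (iX : L.Structure X) (u : A → X) where
  B : Type w
  iB : L.Structure B
  hB : C B iB
  g : @Hom L X B iX iB
  wit : ∀ (P : Type w) (iP : L.Structure P), C P iP → ∀ h : @Hom L B P iB iP,
    SatO rq x P iP (fun z => h (g (u z))) →
    SatO rq x B iB (fun z => g (u z))

/-- Choose a structure of `C` realizing the requirement over `X` if possible. -/
noncomputable def stepD (x : WithTop ρ) (X : Type w) (iX : L.Structure X) (hX : C X iX)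
    (u : A → X) : StepOut (C := C) rq x X iX u := by
  refine Classical.choice ?_
  by_cases H : ∃ (P : Type w) (iP : L.Structure P) (_ : C P iP) (g : @Hom L X P iX iP),
      SatO rq x P iP (fun z => g (u z))
  · obtain ⟨P, iP, hP, g, hg⟩ := H
    exact ⟨P, iP, hP, g, fun _ _ _ _ _ => hg⟩
  · refine ⟨X, iX, hX, @Hom.id L X iX, fun P iP hP h hr => absurd ?_ H⟩
    exact ⟨P, iP, hP, h, hr⟩

variable [LinearOrder ρ]

/-- `TopData` together with the witness property for the requirement at the new stage. -/
structure TopDataW (x : WithTop ρ) {τ : Type w} [Preorder τ] (T : PSys L C A iA τ)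
    extends TopData T where
  wit : ∀ (P : Type w) (iP : L.Structure P), C P iP → ∀ h : @Hom L B P iB iP,
    SatO rq x P iP (fun z => h (fromA' z)) → SatO rq x B iB (fun z => fromA' z)

open Classical in
/-- Build a new top stage over a directed system. -/
noncomputable def mkTopW (hC : Hclosed L C) (hA : C A iA) (x : WithTop ρ) {τ : Type w}
    [Preorder τ] [IsDirected τ (· ≤ ·)] (T : PSys L C A iA τ) : TopDataW rq x T :=
  if hne : Nonempty τ then
    letI : Nonempty τ := hne
    let k₀ : τ := Classical.arbitrary τ
    let d := stepD (C := C) rq x (PSys.Lim T) (PSys.limStr T) (PSys.lim_inC hC T)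
      (fun z => PSys.lmk T k₀ (T.fromA k₀ z))
    { B := d.B
      iB := d.iB
      hB := d.hB
      toTop := fun k => homComp d.g (PSys.of T k)
      fromA' := homComp d.g (homComp (PSys.of T k₀) (T.fromA k₀))
      compat := fun k l h y => congrArg d.g (PSys.lmk_mp T h y)
      compatA := fun k z => congrArg d.g (PSys.lmk_fromA T k k₀ z)
      wit := fun P iP hP h hr => d.wit P iP hP h hr }
  else
    letI : IsEmpty τ := not_nonempty_iff.mp hne
    let d := stepD (C := C) rq x A iA hA id
    { B := d.B
      iB := d.iB
      hB := d.hB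
      toTop := fun k => isEmptyElim k
      fromA' := d.g
      compat := fun k => isEmptyElim k
      compatA := fun k => isEmptyElim k
      wit := fun P iP hP h hr => d.wit P iP hP h hr }

/-- The new top stage built over a directed system. -/
noncomputable def mkTop (hC : Hclosed L C) (hA : C A iA) (x : WithTop ρ) {τ : Type w}
    [Preorder τ] [IsDirected τ (· ≤ ·)] (T : PSys L C A iA τ) : TopData T :=
  (mkTopW rq hC hA x T).toTopData

theorem mkTop_wit (hC : Hclosed L C) (hA : C A iA) (x : WithTop ρ) {τ : Type w}
    [Preorder τ] [IsDirected τ (· ≤ ·)] (T : PSys L C A iA τ) :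
    ∀ (P : Type w) (iP : L.Structure P), C P iP →
      ∀ h : @Hom L (mkTop rq hC hA x T).B P (mkTop rq hC hA x T).iB iP,
      SatO rq x P iP (fun z => h ((mkTop rq hC hA x T).fromA' z)) →
      SatO rq x (mkTop rq hC hA x T).B (mkTop rq hC hA x T).iB
        (fun z => (mkTop rq hC hA x T).fromA' z) :=
  (mkTopW rq hC hA x T).wit

end SatSec
section BdlSec

variable {L : FirstOrder.Language.{u, v}}

/-- A bundled structure. -/
def Bdl (L : FirstOrder.Language.{u, v}) : Type (max u v (w + 1)) := Σ T : Type w, L.Structure T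

/-- Homomorphisms between bundled structures. -/
abbrev bHom (b b' : Bdl.{u,v,w} L) : Type w := @Hom L b.1 b'.1 b.2 b'.2

/-- Transport a homomorphism along an equality of (bundled) domains. -/
def homCastDom {b b' y : Bdl.{u,v,w} L} (e : b = b') (f : bHom b y) : bHom b' y := e ▸ f

/-- Transport a homomorphism along an equality of (bundled) codomains. -/
def homCastCod {b y y' : Bdl.{u,v,w} L} (e : y = y') (f : bHom b y) : bHom b y' := e ▸ f

theorem homCastDom_heq {b b' y : Bdl.{u,v,w} L} (e : b = b') (f : bHom b y) :
    HEq (homCastDom e f) f := by subst e; rfl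

theorem homCastCod_heq {b y y' : Bdl.{u,v,w} L} (e : y = y') (f : bHom b y) :
    HEq (homCastCod e f) f := by subst e; rfl

/-- Application of a bundled homomorphism. -/
def bApp {b b' : Bdl.{u,v,w} L} (f : bHom b b') : b.1 → b'.1 :=
  @Hom.toFun L b.1 b'.1 b.2 b'.2 f

/-- Identity as a bundled homomorphism. -/
def bId (b : Bdl.{u,v,w} L) : bHom b b := @Hom.id L b.1 b.2

theorem bId_apply (b : Bdl.{u,v,w} L) (z : b.1) : bApp (bId b) z = z := rfl

/-- Congruence for applications of (heterogeneously) equal homomorphisms. -/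
theorem happ_heq {b1 b1' b2 b2' : Bdl.{u,v,w} L} (h1 : b1 = b1') (h2 : b2 = b2')
    {f : bHom b1 b2} {f' : bHom b1' b2'} (hf : HEq f f') {z : b1.1} {z' : b1'.1}
    (hz : HEq z z') : HEq (bApp f z) (bApp f' z') := by
  subst h1; subst h2
  have e1 := eq_of_heq hf
  subst e1
  have e2 := eq_of_heq hz
  subst e2
  rfl

theorem bdl_fst_eq {b b' : Bdl.{u,v,w} L} (e : b = b') : b.1 = b'.1 := congrArg Sigma.fst e

theorem bdl_snd_heq {b b' : Bdl.{u,v,w} L} (e : b = b') : HEq b.2 b'.2 := by subst e; rfl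

theorem PSys.mp_eq_id {C : (M : Type w) → L.Structure M → Prop} {A : Type w}
    {iA : L.Structure A} {τ : Type w} [Preorder τ] (T : PSys L C A iA τ) (p : τ) (h : p ≤ p) :
    T.mp p p h = bId ⟨T.carr p, T.str p⟩ := by
  letI := T.str p
  exact DFunLike.ext _ _ (fun z => T.mp_self p z)

theorem bdl_congr {C : (M : Type w) → L.Structure M → Prop} {A : Type w}
    {iA : L.Structure A} {τ : Type w} [Preorder τ] {S S' : PSys L C A iA τ} (h : S = S')
    (p : τ) : (⟨S.carr p, S.str p⟩ : Bdl.{u,v,w} L) = ⟨S'.carr p, S'.str p⟩ := by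
  subst h; rfl

end BdlSec
section TransfiniteSec

variable {L : FirstOrder.Language.{u, v}} {C : (M : Type w) → L.Structure M → Prop}
variable {A : Type w} {iA : L.Structure A}
variable {ρ : Type w} [LinearOrder ρ]
variable (rq : ρ → Σ n : ℕ, L.Formula (Fin n) × (Fin n → A))

/-- The open segment below `i`. -/
abbrev Seg (i : WithTop ρ) : Type w := {x : WithTop ρ // x < i}

/-- The closed segment up to `i` (with `⊤` playing the role of `i` itself). -/
abbrev ClSeg (i : WithTop ρ) : Type w := WithTop (Seg i)

instance (i : WithTop ρ) : IsDirected (Seg i) (· ≤ ·) :=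
  ⟨fun a b => ⟨max a b, le_max_left a b, le_max_right a b⟩⟩

variable {i j : WithTop ρ}

/-- Inclusion of the open segment below `j` into the closed segment up to `i`, `j < i`. -/
def m1 (hj : j < i) : Seg j → ClSeg i := fun x => ((⟨x.1, lt_trans x.2 hj⟩ : Seg i) : ClSeg i)

theorem m1_mono (hj : j < i) : Monotone (m1 (i := i) hj) := fun x y h =>
  WithTop.coe_le_coe.mpr (Subtype.mk_le_mk.mpr (Subtype.coe_le_coe.mpr h))

/-- Inclusion of the closed segment up to `j` into the closed segment up to `i`, `j < i`. -/
def clsMap (hj : j < i) : ClSeg j → ClSeg i := fun y =>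
  match y with
  | ⊤ => ((⟨j, hj⟩ : Seg i) : ClSeg i)
  | (x : Seg j) => ((⟨x.1, lt_trans x.2 hj⟩ : Seg i) : ClSeg i)

theorem clsMap_mono (hj : j < i) : Monotone (clsMap (i := i) hj) := by
  intro x y h
  match x, y, h with
  | ⊤, ⊤, _ => exact le_rfl
  | (x : Seg j), ⊤, _ =>
    exact WithTop.coe_le_coe.mpr (Subtype.mk_le_mk.mpr (le_of_lt x.2))
  | (x : Seg j), (y : Seg j), h =>
    exact WithTop.coe_le_coe.mpr (Subtype.mk_le_mk.mpr (Subtype.coe_le_coe.mpr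
      (WithTop.coe_le_coe.mp h)))
  | ⊤, (y : Seg j), h => exact absurd (WithTop.top_le_iff.mp h) WithTop.coe_ne_top

/-- Restriction of a system on the closed segment up to `i` to the open segment below `j`. -/
def restrMid (S : PSys L C A iA (ClSeg i)) (hj : j < i) : PSys L C A iA (Seg j) :=
  PSys.reindex (m1 hj) (m1_mono hj) S

/-- Restriction of a system on the closed segment up to `i` to the open segment below `i`. -/
def restrOpen (S : PSys L C A iA (ClSeg i)) : PSys L C A iA (Seg i) :=
  PSys.reindex (fun k => (k : ClSeg i)) (fun _ _ h => WithTop.coe_le_coe.mpr h) S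

/-- Restriction of a system on the closed segment up to `i` to the closed segment up to `j`. -/
def restrCls (S : PSys L C A iA (ClSeg i)) (hj : j < i) : PSys L C A iA (ClSeg j) :=
  PSys.reindex (clsMap hj) (clsMap_mono hj) S

/-- The stage `j` of a system, as a `TopData` over the part below `j`. -/
def topAtMid (S : PSys L C A iA (ClSeg i)) (hj : j < i) : TopData (restrMid S hj) where
  B := S.carr ((⟨j, hj⟩ : Seg i) : ClSeg i)
  iB := S.str _
  hB := S.inC _
  toTop k := S.mp (m1 hj k) ((⟨j, hj⟩ : Seg i) : ClSeg i)
    (WithTop.coe_le_coe.mpr (Subtype.mk_le_mk.mpr (le_of_lt k.2)))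
  fromA' := S.fromA _
  compat k l h y := S.mp_comp _ _ _ _ _ y
  compatA k z := S.fromA_comp _ _ _ z

/-- The top stage of a system on a closed segment, as a `TopData` over the open part. -/
def topAtTop (S : PSys L C A iA (ClSeg i)) : TopData (restrOpen S) where
  B := S.carr ⊤
  iB := S.str ⊤
  hB := S.inC ⊤
  toTop k := S.mp (k : ClSeg i) ⊤ le_top
  fromA' := S.fromA ⊤
  compat k l h y := S.mp_comp _ _ _ _ _ y
  compatA k z := S.fromA_comp _ _ _ z

/-- The recursive specification: every stage is obtained from the earlier stages by `mkTop`. -/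
def Spec (hC : Hclosed L C) (hA : C A iA) (i : WithTop ρ) (S : PSys L C A iA (ClSeg i)) : Prop :=
  (∀ (j : WithTop ρ) (hj : j < i), topAtMid S hj = mkTop rq hC hA j (restrMid S hj)) ∧
    topAtTop S = mkTop rq hC hA i (restrOpen S)

theorem spec_restrCls {hC : Hclosed L C} {hA : C A iA} {S : PSys L C A iA (ClSeg i)}
    (hS : Spec rq hC hA i S) (hj : j < i) : Spec rq hC hA j (restrCls S hj) :=
  ⟨fun k hk => hS.1 k (hk.trans hj), hS.1 j hj⟩

end TransfiniteSec
section GlueSec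

variable {L : FirstOrder.Language.{u, v}} {C : (M : Type w) → L.Structure M → Prop}
variable {A : Type w} {iA : L.Structure A}
variable {ρ : Type w} [LinearOrder ρ]
variable {i : WithTop ρ}
variable (F : ∀ j : Seg i, PSys L C A iA (ClSeg j.1))

/-- The bundled top stage of the `j`-th system in a coherent family. -/
def glueBdl (x : Seg i) : Bdl.{u,v,w} L := ⟨(F x).carr ⊤, (F x).str ⊤⟩

theorem glue_bdl_eq (hF : ∀ (x y : Seg i) (hxy : (x : WithTop ρ) < y),
    restrCls (F y) hxy = F x) (x y : Seg i) (hxy : (x : WithTop ρ) < y) :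
    (⟨(F y).carr ((⟨x.1, hxy⟩ : Seg y.1) : ClSeg y.1),
      (F y).str ((⟨x.1, hxy⟩ : Seg y.1) : ClSeg y.1)⟩ : Bdl.{u,v,w} L) = glueBdl F x :=
  congrArg (fun Z : PSys L C A iA (ClSeg x.1) => (⟨Z.carr ⊤, Z.str ⊤⟩ : Bdl.{u,v,w} L))
    (hF x y hxy)

/-- The transition maps of the glued system. -/
noncomputable def glueMp (hF : ∀ (x y : Seg i) (hxy : (x : WithTop ρ) < y),
    restrCls (F y) hxy = F x) (x y : Seg i) (h : x ≤ y) :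
    bHom (glueBdl F x) (glueBdl F y) :=
  if e : x = y then homCastCod (congrArg (glueBdl F) e) (bId (glueBdl F x))
  else
    homCastDom (glue_bdl_eq F hF x y (Subtype.coe_lt_coe.mpr (h.lt_of_ne e)))
      ((F y).mp ((⟨x.1, Subtype.coe_lt_coe.mpr (h.lt_of_ne e)⟩ : Seg y.1) : ClSeg y.1) ⊤ le_top)

theorem glueMp_self (hF : ∀ (x y : Seg i) (hxy : (x : WithTop ρ) < y),
    restrCls (F y) hxy = F x) (x : Seg i) (h : x ≤ x) :
    glueMp F hF x x h = bId (glueBdl F x) := by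
  unfold glueMp
  rw [dif_pos rfl]
  rfl

theorem glueMp_lt (hF : ∀ (x y : Seg i) (hxy : (x : WithTop ρ) < y),
    restrCls (F y) hxy = F x) (x y : Seg i) (hlt : x < y) (h : x ≤ y) :
    HEq (glueMp F hF x y h)
      ((F y).mp ((⟨x.1, Subtype.coe_lt_coe.mpr hlt⟩ : Seg y.1) : ClSeg y.1) ⊤ le_top) := by
  unfold glueMp
  rw [dif_neg hlt.ne]
  exact homCastDom_heq _ _

/-- The glued system on the open segment below `i`. -/
noncomputable def glueV (hF : ∀ (x y : Seg i) (hxy : (x : WithTop ρ) < y),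
    restrCls (F y) hxy = F x) : PSys L C A iA (Seg i) where
  carr x := (F x).carr ⊤
  str x := (F x).str ⊤
  inC x := (F x).inC ⊤
  mp x y h := glueMp F hF x y h
  mp_self x z := by simp only [glueMp_self]; rfl
  mp_comp x y z h1 h2 w := by
    by_cases e1 : x = y
    · subst e1
      simp only [glueMp_self]
      rfl
    · by_cases e2 : y = z
      · subst e2
        simp only [glueMp_self]
        rfl
      · -- x < y < z
        have hxy : (x : WithTop ρ) < y := Subtype.coe_lt_coe.mpr (h1.lt_of_ne e1)
        have hyz : (y : WithTop ρ) < z := Subtype.coe_lt_coe.mpr (h2.lt_of_ne e2)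
        have hxz : (x : WithTop ρ) < z := hxy.trans hyz
        set sx : ClSeg z.1 := ((⟨x.1, hxz⟩ : Seg z.1) : ClSeg z.1) with hsx
        set sy : ClSeg z.1 := ((⟨y.1, hyz⟩ : Seg z.1) : ClSeg z.1) with hsy
        have hle : sx ≤ sy := WithTop.coe_le_coe.mpr (Subtype.mk_le_mk.mpr hxy.le)
        have Ey : restrCls (F z) hyz = F y := hF y z hyz
        have bx : glueBdl F x = ⟨(F z).carr sx, (F z).str sx⟩ := (glue_bdl_eq F hF x z hxz).symm
        have by' : glueBdl F y = ⟨(F z).carr sy, (F z).str sy⟩ := (glue_bdl_eq F hF y z hyz).symm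
        have A1 : HEq (glueMp F hF x y h1) ((F z).mp sx sy hle) := by
          refine (glueMp_lt F hF x y (h1.lt_of_ne e1) h1).trans ?_
          exact PSys.congr_mp Ey.symm ((⟨x.1, hxy⟩ : Seg y.1) : ClSeg y.1) ⊤ le_top
        have A2 : HEq (glueMp F hF y z h2) ((F z).mp sy ⊤ le_top) :=
          glueMp_lt F hF y z (h2.lt_of_ne e2) h2
        have A3 : HEq (glueMp F hF x z (h1.trans h2)) ((F z).mp sx ⊤ le_top) :=
          glueMp_lt F hF x z ((h1.lt_of_ne e1).trans (h2.lt_of_ne e2)) (h1.trans h2)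
        refine eq_of_heq ?_
        have I1 : HEq ((glueMp F hF x y h1) w)
            (((F z).mp sx sy hle) (cast (bdl_fst_eq bx) w)) :=
          hom_apply_heq (bdl_fst_eq bx) (bdl_snd_heq bx) (bdl_fst_eq by') (bdl_snd_heq by')
            A1 (cast_heq _ _).symm
        have I2 : HEq ((glueMp F hF y z h2) ((glueMp F hF x y h1) w))
            (((F z).mp sy ⊤ le_top) (((F z).mp sx sy hle) (cast (bdl_fst_eq bx) w))) :=
          hom_apply_heq (bdl_fst_eq by') (bdl_snd_heq by') rfl HEq.rfl A2 I1
        have I3 : ((F z).mp sy ⊤ le_top) (((F z).mp sx sy hle) (cast (bdl_fst_eq bx) w)) =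
            ((F z).mp sx ⊤ le_top) (cast (bdl_fst_eq bx) w) :=
          (F z).mp_comp sx sy ⊤ hle le_top _
        have I4 : HEq (((F z).mp sx ⊤ le_top) (cast (bdl_fst_eq bx) w))
            ((glueMp F hF x z (h1.trans h2)) w) :=
          hom_apply_heq (bdl_fst_eq bx).symm (bdl_snd_heq bx).symm rfl HEq.rfl A3.symm
            (cast_heq _ _)
        exact I2.trans ((heq_of_eq I3).trans I4)
  fromA x := (F x).fromA ⊤
  fromA_comp x y h z := by
    by_cases e : x = y
    · subst e
      simp only [glueMp_self]
      rfl
    · have hxy : (x : WithTop ρ) < y := Subtype.coe_lt_coe.mpr (h.lt_of_ne e)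
      have Ex : restrCls (F y) hxy = F x := hF x y hxy
      set sx : ClSeg y.1 := ((⟨x.1, hxy⟩ : Seg y.1) : ClSeg y.1) with hsx
      have bx : glueBdl F x = ⟨(F y).carr sx, (F y).str sx⟩ := (glue_bdl_eq F hF x y hxy).symm
      have hfa : HEq ((F x).fromA ⊤) ((F y).fromA sx) := PSys.congr_fromA Ex.symm ⊤
      refine eq_of_heq ?_
      have J0 : HEq (((F x).fromA ⊤) z) (((F y).fromA sx) z) :=
        hom_apply_heq rfl HEq.rfl (bdl_fst_eq bx) (bdl_snd_heq bx) hfa HEq.rfl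
      have J1 : HEq ((glueMp F hF x y h) (((F x).fromA ⊤) z))
          (((F y).mp sx ⊤ le_top) (((F y).fromA sx) z)) :=
        hom_apply_heq (bdl_fst_eq bx) (bdl_snd_heq bx) rfl HEq.rfl
          (glueMp_lt F hF x y (h.lt_of_ne e) h) J0
      have J2 : ((F y).mp sx ⊤ le_top) (((F y).fromA sx) z) = ((F y).fromA ⊤) z :=
        (F y).fromA_comp sx ⊤ le_top z
      exact J1.trans (heq_of_eq J2)

end GlueSec
section UniqueSec

variable {L : FirstOrder.Language.{u, v}} {C : (M : Type w) → L.Structure M → Prop}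
variable {A : Type w} {iA : L.Structure A}
variable {ρ : Type w} [LinearOrder ρ]
variable (rq : ρ → Σ n : ℕ, L.Formula (Fin n) × (Fin n → A))

/-- Two systems satisfying the specification agree, given uniqueness below `i`. -/
theorem spec_unique (hC : Hclosed L C) (hA : C A iA) (i : WithTop ρ)
    (hUniq : ∀ (j : WithTop ρ) (_ : j < i) (S1 S2 : PSys L C A iA (ClSeg j)),
      Spec rq hC hA j S1 → Spec rq hC hA j S2 → S1 = S2)
    (S S' : PSys L C A iA (ClSeg i)) (hS : Spec rq hC hA i S) (hS' : Spec rq hC hA i S') :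
    S = S' := by
  have hcls : ∀ (j : WithTop ρ) (hj : j < i), restrCls S hj = restrCls S' hj := fun j hj =>
    hUniq j hj _ _ (spec_restrCls rq hS hj) (spec_restrCls rq hS' hj)
  -- pointwise consequences at inner stages
  have hcarr : ∀ x : Seg i, S.carr (x : ClSeg i) = S'.carr (x : ClSeg i) := fun x =>
    PSys.congr_carr (hcls x.1 x.2) ⊤
  have hstr : ∀ x : Seg i, HEq (S.str (x : ClSeg i)) (S'.str (x : ClSeg i)) := fun x =>
    PSys.congr_str (hcls x.1 x.2) ⊤
  have hmpSS : ∀ (p q : ClSeg i) (h : p ≤ q), HEq (S.mp p q h) (S'.mp p q h) → True := fun _ _ _ _ => trivial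
  have hmpMid : ∀ (x y : Seg i) (h : (x : ClSeg i) ≤ (y : ClSeg i)),
      HEq (S.mp x y h) (S'.mp x y h) := by
    intro x y h
    by_cases e : x = y
    · subst e
      rw [PSys.mp_eq_id S _ h, PSys.mp_eq_id S' _ h]
      exact congr_arg_heq bId (bdl_congr (hcls x.1 x.2) ⊤)
    · have hxy : (x : WithTop ρ) < y :=
        Subtype.coe_lt_coe.mpr (lt_of_le_of_ne (WithTop.coe_le_coe.mp h) e)
      exact PSys.congr_mp (hcls y.1 y.2) ((⟨x.1, hxy⟩ : Seg y.1) : ClSeg y.1) ⊤ le_top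
  have hfa : ∀ x : Seg i, HEq (S.fromA (x : ClSeg i)) (S'.fromA (x : ClSeg i)) := fun x =>
    PSys.congr_fromA (hcls x.1 x.2) ⊤
  have hOpen : restrOpen S = restrOpen S' := by
    refine PSys.ext' (fun x => hcarr x) (fun x => hstr x) (fun x y h => ?_) (fun x => hfa x)
    exact hmpMid x y (WithTop.coe_le_coe.mpr h)
  have hT : HEq (topAtTop S) (topAtTop S') :=
    (heq_of_eq hS.2).trans ((congr_arg_heq (mkTop rq hC hA i) hOpen).trans
      (heq_of_eq hS'.2).symm)
  have hBtop : S.carr ⊤ = S'.carr ⊤ := TopData.congr_B hOpen hT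
  have hiBtop : HEq (S.str ⊤) (S'.str ⊤) := TopData.congr_iB hOpen hT
  refine PSys.ext' ?_ ?_ ?_ ?_
  · intro p
    match p with
    | ⊤ => exact hBtop
    | (x : Seg i) => exact hcarr x
  · intro p
    match p with
    | ⊤ => exact hiBtop
    | (x : Seg i) => exact hstr x
  · intro p q h
    match p, q, h with
    | ⊤, ⊤, h =>
      rw [PSys.mp_eq_id S _ h, PSys.mp_eq_id S' _ h]
      refine congr_arg_heq bId ?_
      exact Sigma.ext hBtop hiBtop
    | (x : Seg i), ⊤, h => exact TopData.congr_toTop hOpen hT x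
    | (x : Seg i), (y : Seg i), h => exact hmpMid x y h
    | ⊤, (y : Seg i), h => exact absurd (WithTop.top_le_iff.mp h) WithTop.coe_ne_top
  · intro p
    match p with
    | ⊤ => exact TopData.congr_fromA' hOpen hT
    | (x : Seg i) => exact hfa x

end UniqueSec
section ExistsSec

variable {L : FirstOrder.Language.{u, v}} {C : (M : Type w) → L.Structure M → Prop}
variable {A : Type w} {iA : L.Structure A}
variable {ρ : Type w} [LinearOrder ρ] [WellFoundedLT ρ]
variable (rq : ρ → Σ n : ℕ, L.Formula (Fin n) × (Fin n → A))

theorem exists_unique_spec (hC : Hclosed L C) (hA : C A iA) (i : WithTop ρ) :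
    ∃! S : PSys L C A iA (ClSeg i), Spec rq hC hA i S := by
  induction i using WellFoundedLT.induction with
  | ind i IH =>
    have hUniq : ∀ (j : WithTop ρ) (_ : j < i) (S1 S2 : PSys L C A iA (ClSeg j)),
        Spec rq hC hA j S1 → Spec rq hC hA j S2 → S1 = S2 :=
      fun j hj S1 S2 h1 h2 => (IH j hj).unique h1 h2
    let Sel : ∀ j : Seg i, PSys L C A iA (ClSeg j.1) := fun j => (IH j.1 j.2).exists.choose
    have hSel : ∀ j : Seg i, Spec rq hC hA j.1 (Sel j) := fun j => (IH j.1 j.2).exists.choose_spec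
    have hF : ∀ (x y : Seg i) (hxy : (x : WithTop ρ) < y), restrCls (Sel y) hxy = Sel x :=
      fun x y hxy => hUniq x.1 x.2 _ _ (spec_restrCls rq (hSel y) hxy) (hSel x)
    let V : PSys L C A iA (Seg i) := glueV Sel hF
    let d : TopData V := mkTop rq hC hA i V
    let Sf : PSys L C A iA (ClSeg i) := snocTop V d
    have hTopSpec : topAtTop Sf = mkTop rq hC hA i (restrOpen Sf) := rfl
    have hMidSpec : ∀ (j : WithTop ρ) (hj : j < i),
        topAtMid Sf hj = mkTop rq hC hA j (restrMid Sf hj) := by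
      intro j hj
      have hRM : restrMid Sf hj = restrOpen (Sel ⟨j, hj⟩) := by
        refine PSys.ext' ?_ ?_ ?_ ?_
        · intro x
          exact (PSys.congr_carr (hF ⟨x.1, lt_trans x.2 hj⟩ ⟨j, hj⟩ x.2) ⊤).symm
        · intro x
          exact (PSys.congr_str (hF ⟨x.1, lt_trans x.2 hj⟩ ⟨j, hj⟩ x.2) ⊤).symm
        · intro x y h
          by_cases e : x = y
          · subst e
            show HEq (glueMp Sel hF ⟨x.1, lt_trans x.2 hj⟩ ⟨x.1, lt_trans x.2 hj⟩ le_rfl)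
              ((Sel ⟨j, hj⟩).mp (x : ClSeg j) (x : ClSeg j) (le_refl _))
            rw [glueMp_self, PSys.mp_eq_id]
            exact congr_arg_heq bId (glue_bdl_eq Sel hF ⟨x.1, lt_trans x.2 hj⟩ ⟨j, hj⟩ x.2).symm
          · have hlt : (⟨x.1, lt_trans x.2 hj⟩ : Seg i) < ⟨y.1, lt_trans y.2 hj⟩ :=
              Subtype.mk_lt_mk.mpr (Subtype.coe_lt_coe.mpr (h.lt_of_ne e))
            show HEq (glueMp Sel hF ⟨x.1, lt_trans x.2 hj⟩ ⟨y.1, lt_trans y.2 hj⟩ hlt.le)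
              ((Sel ⟨j, hj⟩).mp (x : ClSeg j) (y : ClSeg j) (WithTop.coe_le_coe.mpr h))
            refine (glueMp_lt Sel hF _ _ hlt _).trans ?_
            exact PSys.congr_mp (hF ⟨y.1, lt_trans y.2 hj⟩ ⟨j, hj⟩ y.2).symm
              ((⟨x.1, Subtype.coe_lt_coe.mpr hlt⟩ : Seg y.1) : ClSeg y.1) ⊤ le_top
        · intro x
          exact (PSys.congr_fromA (hF ⟨x.1, lt_trans x.2 hj⟩ ⟨j, hj⟩ x.2) ⊤).symm
      have hK2 : HEq (topAtMid Sf hj) (topAtTop (Sel ⟨j, hj⟩)) := by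
        refine TopData.heq_of hRM rfl HEq.rfl ?_ HEq.rfl
        intro k
        have hlt : (⟨k.1, lt_trans k.2 hj⟩ : Seg i) < ⟨j, hj⟩ := Subtype.mk_lt_mk.mpr k.2
        show HEq (glueMp Sel hF ⟨k.1, lt_trans k.2 hj⟩ ⟨j, hj⟩ hlt.le)
          ((Sel ⟨j, hj⟩).mp (k : ClSeg j) ⊤ le_top)
        exact glueMp_lt Sel hF _ _ hlt _
      exact eq_of_heq (hK2.trans ((heq_of_eq (hSel ⟨j, hj⟩).2).trans
        (congr_arg_heq (mkTop rq hC hA j) hRM.symm)))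
    refine ⟨Sf, ⟨hMidSpec, hTopSpec⟩, ?_⟩
    intro S' hS'
    exact spec_unique rq hC hA i hUniq S' Sf hS' ⟨hMidSpec, hTopSpec⟩

end ExistsSec
section OneStepSec

open Cardinal

variable {L : FirstOrder.Language.{u, v}} {C : (M : Type w) → L.Structure M → Prop}

theorem formula_countable (hL : L.card ≤ Cardinal.aleph0) (n : ℕ) :
    ∃ e : ℕ → L.Formula (Fin n), Function.Surjective e := by
  have h1 : #(Σ k, L.BoundedFormula (Fin n) k) ≤ ℵ₀ := by
    refine (BoundedFormula.card_le).trans (max_le le_rfl ?_)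
    refine Cardinal.add_le_aleph0.mpr ⟨?_, Cardinal.lift_le_aleph0.mpr hL⟩
    exact Cardinal.lift_le_aleph0.mpr Cardinal.mk_le_aleph0
  haveI : Countable (Σ k, L.BoundedFormula (Fin n) k) := Cardinal.mk_le_aleph0_iff.mp h1
  haveI : Countable (L.Formula (Fin n)) := by
    have : Function.Injective (fun φ : L.Formula (Fin n) =>
        (⟨0, φ⟩ : Σ k, L.BoundedFormula (Fin n) k)) := by
      intro φ ψ h
      simpa using h
    exact this.countable
  have hne : Nonempty (L.Formula (Fin n)) := ⟨BoundedFormula.falsum⟩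
  exact exists_surjective_nat _

/-- The one-step lemma: every `A` in `C` maps into some `B` in `C` such that every positive
existential requirement over `A` that is realizable in a continuation of `B` is realized
in `B` itself. -/
theorem onestep (hC : Hclosed L C) (hL : L.card ≤ Cardinal.aleph0)
    (A : Type w) (iA : L.Structure A) (hA : C A iA) :
    ∃ (B : Type w) (iB : L.Structure B) (_ : C B iB) (f : @Hom L A B iA iB),
      ∀ (n : ℕ) (φ : L.Formula (Fin n)), IsPE φ → ∀ (a : Fin n → A)
        (P : Type w) (iP : L.Structure P), C P iP → ∀ (h : @Hom L B P iB iP),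
        (@Formula.Realize L P iP _ φ (fun k => h (f (a k)))) →
        @Formula.Realize L B iB _ φ (fun k => f (a k)) := by
  classical
  have hcount := formula_countable (L := L) hL
  set e : ∀ n : ℕ, ℕ → L.Formula (Fin n) := fun n => (hcount n).choose with he
  have hesurj : ∀ n, Function.Surjective (e n) := fun n => (hcount n).choose_spec
  -- the requirement index type
  let ρ : Type w := ℕ × (Σ n : ℕ, (Fin n → A))
  let rq : ρ → Σ n : ℕ, L.Formula (Fin n) × (Fin n → A) :=
    fun p => ⟨p.2.1, (e p.2.1 p.1, p.2.2)⟩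
  obtain ⟨lo, wf⟩ := exists_wellOrder ρ
  letI : LinearOrder ρ := lo
  haveI : WellFoundedLT ρ := wf
  obtain ⟨SS, hSS⟩ := (exists_unique_spec rq hC hA (⊤ : WithTop ρ)).exists
  refine ⟨SS.carr ⊤, SS.str ⊤, SS.inC ⊤, SS.fromA ⊤, ?_⟩
  intro n φ hφ a P iP hP h hreal
  obtain ⟨m, hm⟩ := hesurj n φ
  subst hm
  set r : ρ := (m, ⟨n, a⟩) with hr
  set x : WithTop ρ := (r : WithTop ρ) with hx
  have hxt : x < (⊤ : WithTop ρ) := WithTop.coe_lt_top r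
  set p : ClSeg (⊤ : WithTop ρ) := ((⟨x, hxt⟩ : Seg (⊤ : WithTop ρ)) : ClSeg (⊤ : WithTop ρ))
    with hp
  have wit := mkTop_wit rq hC hA x (restrMid SS hxt)
  rw [← hSS.1 x hxt] at wit
  -- the composite continuation from the stage of `r` into `P`
  have hsat := wit P iP hP (homComp h (SS.mp p ⊤ le_top)) ?_
  · -- transfer the realization from the stage to the top along the limit map (PE preserved)
    letI := SS.str p
    letI := SS.str ⊤
    have htrans := isPE_realize_hom_formula (SS.mp p ⊤ le_top) hφ
      (fun k => SS.fromA p (a k)) hsat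
    have : (fun k => (SS.mp p ⊤ le_top) (SS.fromA p (a k))) = (fun k => SS.fromA ⊤ (a k)) :=
      funext fun k => SS.fromA_comp p ⊤ le_top (a k)
    rwa [this] at htrans
  · -- the premise: the requirement is realized in `P` via the composite
    show @Formula.Realize L P iP (Fin n) (e n m)
      (fun k => (homComp h (SS.mp p ⊤ le_top)) (SS.fromA p (a k)))
    have : (fun k => (homComp h (SS.mp p ⊤ le_top)) (SS.fromA p (a k))) =
        (fun k => h (SS.fromA ⊤ (a k))) := by
      funext k
      rw [homComp_apply]
      exact congrArg h (SS.fromA_comp p ⊤ le_top (a k))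
    rw [this]
    exact hreal

end OneStepSec
section IterSec

variable {L : FirstOrder.Language.{u, v}} {C : (M : Type w) → L.Structure M → Prop}

/-- Bundled structure in `C`. -/
def CBdl (L : FirstOrder.Language.{u, v}) (C : (M : Type w) → L.Structure M → Prop) :=
  Σ (T : Type w) (iT : L.Structure T), PLift (C T iT)

/-- The result of one application of the one-step lemma. -/
structure StepRes (b : CBdl L C) where
  nxt : CBdl L C
  f : @Hom L b.1 nxt.1 b.2.1 nxt.2.1
  wit : ∀ (n : ℕ) (φ : L.Formula (Fin n)), IsPE φ → ∀ (a : Fin n → b.1)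
    (P : Type w) (iP : L.Structure P), C P iP → ∀ (h : @Hom L nxt.1 P nxt.2.1 iP),
    (@Formula.Realize L P iP _ φ (fun k => h (f (a k)))) →
    @Formula.Realize L nxt.1 nxt.2.1 _ φ (fun k => f (a k))

/-- One application of the one-step lemma, chosen. -/
noncomputable def step (hC : Hclosed L C) (hL : L.card ≤ Cardinal.aleph0) (b : CBdl L C) :
    StepRes b := by
  refine Classical.choice ?_
  obtain ⟨B, iB, hB, f, wit⟩ := onestep hC hL b.1 b.2.1 b.2.2.down
  exact ⟨⟨B, iB, PLift.up hB⟩, f, wit⟩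

variable (hC : Hclosed L C) (hL : L.card ≤ Cardinal.aleph0)
variable (M : Type w) (instM : L.Structure M) (hM : C M instM)

/-- The ω-chain obtained by iterating the one-step construction. -/
noncomputable def chain (hC : Hclosed L C) (hL : L.card ≤ Cardinal.aleph0)
    (M : Type w) (instM : L.Structure M) (hM : C M instM) : ℕ → CBdl L C :=
  fun k => Nat.rec (⟨M, instM, PLift.up hM⟩ : CBdl L C) (fun _ prev => (step hC hL prev).nxt) k

/-- The transition maps of the ω-chain. -/
noncomputable def mpN (m : ℕ) : ∀ {k : ℕ}, m ≤ k →
    @Hom L (chain hC hL M instM hM m).1 (chain hC hL M instM hM k).1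
      (chain hC hL M instM hM m).2.1 (chain hC hL M instM hM k).2.1 :=
  fun {k} h => Nat.leRecOn h
    (fun {j} g => homComp (step hC hL (chain hC hL M instM hM j)).f g)
    (bId ⟨(chain hC hL M instM hM m).1, (chain hC hL M instM hM m).2.1⟩)

theorem mpN_self (m : ℕ) (h : m ≤ m) (x : (chain hC hL M instM hM m).1) :
    (mpN hC hL M instM hM m h) x = x := by
  simp only [mpN, Nat.leRecOn_self]
  rfl

theorem mpN_succ (m k : ℕ) (h1 : m ≤ k) (h2 : m ≤ k + 1) :
    mpN hC hL M instM hM m h2 =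
      homComp (step hC hL (chain hC hL M instM hM k)).f (mpN hC hL M instM hM m h1) := by
  simp only [mpN]
  exact Nat.leRecOn_succ h1 _

theorem mpN_comp (m n : ℕ) (h1 : m ≤ n) : ∀ (k : ℕ) (h2 : n ≤ k)
    (x : (chain hC hL M instM hM m).1),
    (mpN hC hL M instM hM n h2) ((mpN hC hL M instM hM m h1) x) =
      (mpN hC hL M instM hM m (h1.trans h2)) x := by
  intro k h2
  induction k, h2 using Nat.le_induction with
  | base =>
    intro x
    rw [mpN_self]
  | succ k hk IH =>
    intro x
    rw [mpN_succ hC hL M instM hM n k hk, mpN_succ hC hL M instM hM m k (h1.trans hk)]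
    show (step hC hL (chain hC hL M instM hM k)).f
        ((mpN hC hL M instM hM n hk) ((mpN hC hL M instM hM m h1) x)) =
      (step hC hL (chain hC hL M instM hM k)).f ((mpN hC hL M instM hM m (h1.trans hk)) x)
    rw [IH]

/-- The ω-chain as a directed system over `ULift ℕ`. -/
noncomputable def chainSys : PSys L C M instM (ULift.{w} ℕ) :=
  letI : LinearOrder (ULift.{w} ℕ) := LinearOrder.lift' ULift.down ULift.down_injective
  { carr := fun u => (chain hC hL M instM hM u.down).1
    str := fun u => (chain hC hL M instM hM u.down).2.1
    inC := fun u => (chain hC hL M instM hM u.down).2.2.down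
    mp := fun u v h => mpN hC hL M instM hM u.down (h : u.down ≤ v.down)
    mp_self := fun u x => mpN_self hC hL M instM hM u.down le_rfl x
    mp_comp := fun u v t h1 h2 x => mpN_comp hC hL M instM hM u.down v.down h1 t.down h2 x
    fromA := fun u => mpN hC hL M instM hM 0 (Nat.zero_le u.down)
    fromA_comp := fun u v h x =>
      mpN_comp hC hL M instM hM 0 u.down (Nat.zero_le _) v.down h x }

end IterSec
section MainSec

variable {L : FirstOrder.Language.{u, v}} {C : (M : Type w) → L.Structure M → Prop}

theorem main (hL : L.card ≤ Cardinal.aleph0) (hclosed : Hclosed L C)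
    (M : Type w) (instM : L.Structure M) (hM : C M instM) :
    ∃ (N : Type w) (instN : L.Structure N), C N instN ∧
      ∃ _ : @Hom L M N instM instN,
        ∀ (P : Type w) (instP : L.Structure P), C P instP →
          ∀ (h : @Hom L N P instN instP) (n : ℕ) (φ : L.Formula (Fin n)), IsPE φ →
            ∀ a : Fin n → N,
              @Formula.Realize L P instP _ φ (fun k => h.toFun (a k)) →
              @Formula.Realize L N instN _ φ a := by
  classical
  haveI : IsDirected (ULift.{w} ℕ) (· ≤ ·) :=
    ⟨fun a b => ⟨⟨max a.down b.down⟩, le_max_left a.down b.down, le_max_right a.down b.down⟩⟩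
  haveI : Nonempty (ULift.{w} ℕ) := ⟨⟨0⟩⟩
  set T := chainSys hclosed hL M instM hM with hT
  refine ⟨PSys.Lim T, PSys.limStr T, PSys.lim_inC hclosed T, PSys.of T ⟨0⟩, ?_⟩
  intro P instP hP h n φ hφ a hreal
  have hrep : ∀ k : Fin n, ∃ (j : ULift.{w} ℕ) (b : T.carr j), PSys.lmk T j b = a k :=
    fun k => PSys.exists_of T (a k)
  choose js bs hbs using hrep
  obtain ⟨mm, hmm⟩ := Finite.exists_le js
  set c : Fin n → T.carr mm := fun k => T.mp (js k) mm (hmm k) (bs k) with hcdef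
  have hck : ∀ k, PSys.lmk T mm (c k) = a k := fun k =>
    (PSys.lmk_mp T (hmm k) (bs k)).trans (hbs k)
  set st := step hclosed hL (chain hclosed hL M instM hM mm.down) with hst
  have hle : mm ≤ (⟨mm.down + 1⟩ : ULift.{w} ℕ) := Nat.le_succ mm.down
  have succ_eq : ∀ (z : T.carr mm),
      PSys.lmk T ⟨mm.down + 1⟩ (st.f z) = PSys.lmk T mm z := by
    intro z
    have h1 : T.mp mm ⟨mm.down + 1⟩ hle z = st.f z := by
      show mpN hclosed hL M instM hM mm.down hle z = st.f z
      rw [mpN_succ hclosed hL M instM hM mm.down mm.down le_rfl hle]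
      show st.f ((mpN hclosed hL M instM hM mm.down le_rfl) z) = st.f z
      exact congrArg st.f (mpN_self hclosed hL M instM hM mm.down le_rfl z)
    rw [← h1]
    exact PSys.lmk_mp T hle z
  have hpre : @Formula.Realize L P instP (Fin n) φ
      (fun k => (homComp h (PSys.of T ⟨mm.down + 1⟩)) (st.f (c k))) := by
    have heq : (fun k => (homComp h (PSys.of T ⟨mm.down + 1⟩)) (st.f (c k))) =
        (fun k => h (a k)) := by
      funext k
      refine (homComp_apply h _ _).trans ?_
      exact congrArg h ((succ_eq (c k)).trans (hck k))
    rw [heq]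
    exact hreal
  have hwit := st.wit n φ hφ c P instP hP (homComp h (PSys.of T ⟨mm.down + 1⟩)) hpre
  letI := T.str (⟨mm.down + 1⟩ : ULift.{w} ℕ)
  letI := PSys.limStr T
  have htrans := isPE_realize_hom_formula (PSys.of T ⟨mm.down + 1⟩) hφ
    (fun k => st.f (c k)) hwit
  have heq2 : (fun k => (PSys.of T ⟨mm.down + 1⟩) (st.f (c k))) = a := by
    funext k
    exact (succ_eq (c k)).trans (hck k)
  rwa [heq2] at htrans

end MainSec
end PEC

/-- In a nonempty inductive class (a class of structures of a countable language closed under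
directed colimits of homomorphisms), every structure admits a homomorphism into a positively
existentially closed member, i.e. one all of whose homomorphisms into members of the class
reflect positive existential formulas (are immersions). -/
theorem stmt_13 (L : FirstOrder.Language.{u, v}) (hL : L.card ≤ Cardinal.aleph0)
    (C : (M : Type w) → L.Structure M → Prop)
    (hne : ∃ (M : Type w) (inst : L.Structure M), C M inst)
    -- `C` is closed under directed colimits of homomorphisms:
    (hclosed : ∀ (ι : Type w) (_ : Preorder ι), IsDirected ι (· ≤ ·) → Nonempty ι →
      ∀ (G : ι → Type w) (instG : ∀ i, L.Structure (G i))
        (f : ∀ i j, i ≤ j → (@Hom L (G i) (G j) (instG i) (instG j))),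
        (∀ i (a : G i), (f i i le_rfl).toFun a = a) →
        (∀ i j k (hij : i ≤ j) (hjk : j ≤ k) (a : G i),
          (f j k hjk).toFun ((f i j hij).toFun a) = (f i k (le_trans hij hjk)).toFun a) →
        (∀ i, C (G i) (instG i)) →
        -- any colimit of the system lies in `C`:
        ∀ (N : Type w) (instN : L.Structure N) (g : ∀ i, @Hom L (G i) N (instG i) instN),
          (∀ i j (h : i ≤ j) (a : G i), (g j).toFun ((f i j h).toFun a) = (g i).toFun a) →
          (∀ x : N, ∃ i, ∃ a : G i, (g i).toFun a = x) →
          (∀ i (l : ℕ) (R : L.Relations l) (a : Fin l → G i),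
            @Structure.RelMap L N instN l R (fun k => (g i).toFun (a k)) →
            ∃ j, ∃ h : i ≤ j,
              @Structure.RelMap L (G j) (instG j) l R fun k => (f i j h).toFun (a k)) →
          (∀ i (a b : G i), (g i).toFun a = (g i).toFun b →
            ∃ j, ∃ h : i ≤ j, (f i j h).toFun a = (f i j h).toFun b) →
          C N instN) :
    ∀ (M : Type w) (instM : L.Structure M), C M instM →
      ∃ (N : Type w) (instN : L.Structure N), C N instN ∧
        ∃ _ : @Hom L M N instM instN,
          -- `N` is positively existentially closed in `C`:
          ∀ (P : Type w) (instP : L.Structure P), C P instP →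
            ∀ (h : @Hom L N P instN instP) (n : ℕ) (φ : L.Formula (Fin n)), IsPE φ →
              ∀ a : Fin n → N,
                @Formula.Realize L P instP _ φ (fun k => h.toFun (a k)) →
                @Formula.Realize L N instN _ φ a := by
  intro M instM hM
  exact PEC.main hL hclosed M instM hM
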